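/- For every n ≥ 4, the diameter of the cubical staircase graph CS_n equals 3(n−3). -/

import Mathlib

open SimpleGraph Finset

/-- The `k`-token graph of a graph `G`: vertices are `k`-element subsets of the vertex set,
two subsets adjacent iff their symmetric difference is `{x, y}` with `xy` an edge of `G`. -/
def tokenGraph {V : Type*} [DecidableEq V] (G : SimpleGraph V) (k : ℕ) :
    SimpleGraph {s : Finset V // s.card = k} where
  Adj A B := ∃ x y, G.Adj x y ∧ symmDiff A.1 B.1 = {x, y}
  symm := ⟨by
    rintro A B ⟨x, y, hxy, h⟩
    exact ⟨x, y, hxy, by rwa [symmDiff_comm]⟩⟩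
  loopless := ⟨by
    rintro A ⟨x, y, hxy, h⟩
    rw [symmDiff_self] at h
    exact (Finset.insert_nonempty x {y}).ne_empty (by simpa using h.symm)⟩

/-- Vertex set of the cubical staircase graph `CS n` (1-indexed coordinates). -/
abbrev CSVert (n : ℕ) :=
  {v : ℕ × ℕ × ℕ // 1 ≤ v.1 ∧ v.1 ≤ n - 2 ∧ 1 ≤ v.2.1 ∧ v.2.1 ≤ v.1 ∧
    1 ≤ v.2.2 ∧ v.2.2 ≤ n - 1 - v.1}

/-- The cubical staircase graph `CS n`: two vertices are adjacent iff they differ in exactly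
one coordinate, by exactly 1. -/
def CS (n : ℕ) : SimpleGraph (CSVert n) where
  Adj a b :=
    (a.1.1 = b.1.1 ∧ a.1.2.1 = b.1.2.1 ∧ (a.1.2.2 + 1 = b.1.2.2 ∨ b.1.2.2 + 1 = a.1.2.2)) ∨
    (a.1.1 = b.1.1 ∧ a.1.2.2 = b.1.2.2 ∧ (a.1.2.1 + 1 = b.1.2.1 ∨ b.1.2.1 + 1 = a.1.2.1)) ∨
    (a.1.2.1 = b.1.2.1 ∧ a.1.2.2 = b.1.2.2 ∧ (a.1.1 + 1 = b.1.1 ∨ b.1.1 + 1 = a.1.1))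
  symm := ⟨by intro a b h; omega⟩
  loopless := ⟨by intro a h; omega⟩

/-- Disjoint union of an arbitrary family of graphs. -/
def sigmaGraph {ι : Type*} {V : ι → Type*} (G : ∀ i, SimpleGraph (V i)) :
    SimpleGraph (Σ i, V i) where
  Adj a b := ∃ (i : ι) (x y : V i), (G i).Adj x y ∧ a = ⟨i, x⟩ ∧ b = ⟨i, y⟩
  symm := ⟨by rintro a b ⟨i, x, y, h, rfl, rfl⟩; exact ⟨i, y, x, h.symm, rfl, rfl⟩⟩
  loopless := ⟨by
    rintro a ⟨i, x, y, h, rfl, he⟩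
    exact h.ne (by simpa using he)⟩

/-- L1 distance between two vertices of `CS n`. -/
def csL1 {n : ℕ} (a b : CSVert n) : ℕ :=
  ((a.1.1 - b.1.1) + (b.1.1 - a.1.1)) + ((a.1.2.1 - b.1.2.1) + (b.1.2.1 - a.1.2.1)) +
  ((a.1.2.2 - b.1.2.2) + (b.1.2.2 - a.1.2.2))

lemma csL1_self {n : ℕ} (a : CSVert n) : csL1 a a = 0 := by simp [csL1]

lemma csL1_eq_one_of_adj {n : ℕ} {a b : CSVert n} (h : (CS n).Adj a b) : csL1 a b = 1 := by
  obtain ⟨⟨i1, j1, k1⟩, ha⟩ := a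
  obtain ⟨⟨i2, j2, k2⟩, hb⟩ := b
  simp only [CS, csL1] at h ⊢
  (try dsimp only at h ⊢); (try dsimp only)
  omega

lemma eq_of_csL1 {n : ℕ} {a b : CSVert n} (h : csL1 a b = 0) : a = b := by
  obtain ⟨⟨i1, j1, k1⟩, ha⟩ := a
  obtain ⟨⟨i2, j2, k2⟩, hb⟩ := b
  simp only [csL1] at h
  (try dsimp only at h)
  simp only [Subtype.mk.injEq, Prod.mk.injEq]
  omega

lemma csStep {n : ℕ} {a b : CSVert n} (hab : a ≠ b) :
    ∃ c : CSVert n, (CS n).Adj a c ∧ csL1 c b + 1 = csL1 a b := by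
  obtain ⟨⟨i1, j1, k1⟩, ha⟩ := a
  obtain ⟨⟨i2, j2, k2⟩, hb⟩ := b
  have hne : ¬(i1 = i2 ∧ j1 = j2 ∧ k1 = k2) := by
    intro h
    exact hab (by simp only [Subtype.mk.injEq, Prod.mk.injEq]; exact h)
  (try dsimp only at ha hb)
  by_cases hk : k2 < k1
  · refine ⟨⟨(i1, j1, k1 - 1), ?_⟩, ?_, ?_⟩
    · (try dsimp only); omega
    · show _ ∨ _ ∨ _; (try dsimp only); omega
    · simp only [csL1]; (try dsimp only); omega
  by_cases hj : j2 < j1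
  · refine ⟨⟨(i1, j1 - 1, k1), ?_⟩, ?_, ?_⟩
    · (try dsimp only); omega
    · show _ ∨ _ ∨ _; (try dsimp only); omega
    · simp only [csL1]; (try dsimp only); omega
  by_cases hi1 : i1 < i2
  · refine ⟨⟨(i1 + 1, j1, k1), ?_⟩, ?_, ?_⟩
    · (try dsimp only); omega
    · show _ ∨ _ ∨ _; (try dsimp only); omega
    · simp only [csL1]; (try dsimp only); omega
  by_cases hi2 : i2 < i1
  · refine ⟨⟨(i1 - 1, j1, k1), ?_⟩, ?_, ?_⟩
    · (try dsimp only); omega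
    · show _ ∨ _ ∨ _; (try dsimp only); omega
    · simp only [csL1]; (try dsimp only); omega
  by_cases hj2 : j1 < j2
  · refine ⟨⟨(i1, j1 + 1, k1), ?_⟩, ?_, ?_⟩
    · (try dsimp only); omega
    · show _ ∨ _ ∨ _; (try dsimp only); omega
    · simp only [csL1]; (try dsimp only); omega
  · refine ⟨⟨(i1, j1, k1 + 1), ?_⟩, ?_, ?_⟩
    · (try dsimp only); omega
    · show _ ∨ _ ∨ _; (try dsimp only); omega
    · simp only [csL1]; (try dsimp only); omega

lemma csWalk {n : ℕ} : ∀ (m : ℕ) (a b : CSVert n), csL1 a b ≤ m →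
    ∃ p : (CS n).Walk a b, p.length ≤ m := by
  intro m
  induction m with
  | zero =>
    intro a b h
    have : a = b := eq_of_csL1 (Nat.le_zero.mp h)
    subst this
    exact ⟨.nil, le_rfl⟩
  | succ m ih =>
    intro a b h
    by_cases hab : a = b
    · subst hab; exact ⟨.nil, by simp⟩
    · obtain ⟨c, hadj, hc⟩ := csStep hab
      obtain ⟨p, hp⟩ := ih c b (by omega)
      exact ⟨.cons hadj p, by simp only [SimpleGraph.Walk.length_cons]; omega⟩

lemma csL1_tri1 (x y z : ℕ) : (x - z) + (z - x) ≤ ((x - y) + (y - x)) + ((y - z) + (z - y)) := by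
  omega

lemma csL1_tri_aux (i1 j1 k1 i2 j2 k2 i3 j3 k3 : ℕ) :
    ((i1 - i3) + (i3 - i1)) + ((j1 - j3) + (j3 - j1)) + ((k1 - k3) + (k3 - k1)) ≤
      (((i1 - i2) + (i2 - i1)) + ((j1 - j2) + (j2 - j1)) + ((k1 - k2) + (k2 - k1))) +
      (((i2 - i3) + (i3 - i2)) + ((j2 - j3) + (j3 - j2)) + ((k2 - k3) + (k3 - k2))) := by
  refine le_trans (Nat.add_le_add (Nat.add_le_add (csL1_tri1 i1 i2 i3) (csL1_tri1 j1 j2 j3))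
    (csL1_tri1 k1 k2 k3)) (le_of_eq ?_)
  ring

lemma csL1_triangle {n : ℕ} (a b c : CSVert n) : csL1 a c ≤ csL1 a b + csL1 b c :=
  csL1_tri_aux a.1.1 a.1.2.1 a.1.2.2 b.1.1 b.1.2.1 b.1.2.2 c.1.1 c.1.2.1 c.1.2.2

lemma csL1_le_length {n : ℕ} {a b : CSVert n} (p : (CS n).Walk a b) : csL1 a b ≤ p.length := by
  induction p with
  | nil => simp [csL1_self]
  | @cons u v w h p ih =>
    have h1 : csL1 u v = 1 := csL1_eq_one_of_adj h
    have htri := csL1_triangle u v w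
    simp only [SimpleGraph.Walk.length_cons]
    omega

lemma csL1_le {n : ℕ} (hn : 4 ≤ n) (a b : CSVert n) : csL1 a b ≤ 3 * (n - 3) := by
  obtain ⟨⟨i1, j1, k1⟩, ha⟩ := a
  obtain ⟨⟨i2, j2, k2⟩, hb⟩ := b
  (try dsimp only at ha hb)
  simp only [csL1]
  (try dsimp only)
  omega

theorem stmt7 {n : ℕ} (hn : 4 ≤ n) : (CS n).diam = 3 * (n - 3) := by
  have hub : (CS n).ediam ≤ (3 * (n - 3) : ℕ) := by
    apply SimpleGraph.ediam_le_of_edist_le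
    intro u v
    obtain ⟨p, hp⟩ := csWalk (3 * (n - 3)) u v (csL1_le hn u v)
    exact (SimpleGraph.edist_le p).trans (by exact_mod_cast hp)
  have hne : (CS n).ediam ≠ ⊤ := ne_top_of_le_ne_top (ENat.coe_ne_top _) hub
  have key : ∀ u v : CSVert n, u.1 = (1, 1, n - 2) → v.1 = (n - 2, n - 2, 1) →
      3 * (n - 3) ≤ (CS n).dist u v := by
    intro u v hu hv
    have hr : (CS n).Reachable u v := ⟨(csWalk (3 * (n - 3)) u v (csL1_le hn u v)).choose⟩
    obtain ⟨p, hp⟩ := hr.exists_walk_length_eq_dist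
    have h1 := csL1_le_length p
    have h2 : 3 * (n - 3) ≤ csL1 u v := by
      obtain ⟨⟨i1, j1, k1⟩, ha⟩ := u
      obtain ⟨⟨i2, j2, k2⟩, hb⟩ := v
      (try dsimp only at hu hv)
      simp only [Prod.mk.injEq] at hu hv
      simp only [csL1]
      (try dsimp only)
      omega
    omega
  have h3 : 3 * (n - 3) ≤ (CS n).diam :=
    le_trans (key ⟨(1, 1, n - 2), by (try dsimp only); omega⟩
      ⟨(n - 2, n - 2, 1), by (try dsimp only); omega⟩ rfl rfl)
      (SimpleGraph.dist_le_diam hne)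
  have h5 : (CS n).diam ≤ 3 * (n - 3) := by
    have := ENat.toNat_le_toNat hub (ENat.coe_ne_top _)
    rw [ENat.toNat_coe] at this
    simpa [SimpleGraph.diam] using this
  omega
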